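/- Suppose 0 < α < ᾱ, and let ψ₁ < ψ₂ in (-π_p/2, 0) be the two roots of α + ((n-1)√(-k)/(p-1))·cos_p^{(p-1)}(ψ)·sin_p(ψ) = 0. Then the solution φ of φ' = α + ((n-1)√(-k)/(p-1))·cos_p^{(p-1)}(φ)·sin_p(φ) with φ(0) = -π_p/2 is bounded above by ψ₂ - ε for suitable ε > 0, converges to ψ₁ as t → ∞, and never reaches π_p/2. -/

import Mathlib

open Real Set Filter MeasureTheory

/-- The signed power `x^{(q)} := |x|^{q-?}`; here `spow x q = |x|^q · sign x`,
so that `x^{(p-1)} = |x|^{p-2}·x = spow x (p-1)`. -/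
noncomputable def spow (x q : ℝ) : ℝ := Real.sign x * |x| ^ q

/-- The generalized half-period `π_p = ∫_{-1}^1 (1-|s|^p)^{-1/p} ds`. -/
noncomputable def pip (p : ℝ) : ℝ := ∫ s in (-1:ℝ)..1, (1 - |s| ^ p) ^ (-1/p)

/-- `sinp` and `cosp` are the generalized p-trigonometric functions:
on `[-π_p/2, π_p/2]` the function `sinp` is defined implicitly by
`t = ∫_0^{sinp t} (1-|s|^p)^{-1/p} ds`, it satisfies the reflection rule
`sinp t = sinp (π_p - t)` on `[π_p/2, 3π_p/2]`, is `2π_p`-periodic, and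
`cosp` is its derivative. -/
def IsPTrig (p : ℝ) (sinp cosp : ℝ → ℝ) : Prop :=
  (∀ t ∈ Set.Icc (-(pip p)/2) (pip p/2),
      t = ∫ s in (0:ℝ)..(sinp t), (1 - |s| ^ p) ^ (-1/p)) ∧
  (∀ t ∈ Set.Icc (pip p/2) (3 * pip p/2), sinp t = sinp (pip p - t)) ∧
  (∀ t, sinp (t + 2 * pip p) = sinp t) ∧
  (∀ t, HasDerivAt sinp (cosp t) t)


noncomputable def pf (p : ℝ) : ℝ → ℝ := fun s => (1 - |s| ^ p) ^ (-1/p)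

lemma pf_measurable (p : ℝ) : Measurable (pf p) :=
  (measurable_const.sub ((measurable_id.abs).pow measurable_const)).pow measurable_const

lemma rpow_neg_exp_anti {p x y : ℝ} (hp : 0 < p) (hx : 0 < x) (hxy : x ≤ y) :
    y ^ (-1/p) ≤ x ^ (-1/p) := by
  have hy : 0 < y := lt_of_lt_of_le hx hxy
  rw [neg_div, Real.rpow_neg hy.le, Real.rpow_neg hx.le]
  have h1 : 0 < x ^ (1/p) := Real.rpow_pos_of_pos hx _
  have h2 : x ^ (1/p) ≤ y ^ (1/p) := Real.rpow_le_rpow hx.le hxy (by positivity)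
  exact inv_anti₀ h1 h2

lemma pf_one_eq {p : ℝ} (hp : 1 < p) : pf p 1 = 0 := by
  have hp0 : (0:ℝ) < p := by linarith
  simp [pf, Real.one_rpow, Real.zero_rpow (by positivity : -1/p ≠ 0)]

lemma pf_negone_eq {p : ℝ} (hp : 1 < p) : pf p (-1) = 0 := by
  have hp0 : (0:ℝ) < p := by linarith
  simp [pf, Real.one_rpow, Real.zero_rpow (by positivity : -1/p ≠ 0)]

lemma pf_int_Icc01 {p : ℝ} (hp : 1 < p) : IntegrableOn (pf p) (Icc (0:ℝ) 1) volume := by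
  have hp0 : (0:ℝ) < p := by linarith
  have hr : (-1:ℝ) < -1/p := by
    rw [neg_div, neg_lt_neg_iff]
    rw [div_lt_one hp0]; linarith
  have hg0 : IntervalIntegrable (fun x : ℝ => x ^ (-1/p)) volume 0 1 :=
    intervalIntegral.intervalIntegrable_rpow' hr
  have hg1 : IntervalIntegrable (fun x : ℝ => (1 - x) ^ (-1/p)) volume 0 1 := by
    have := hg0.comp_sub_left 1
    simpa using this.symm
  have hg2 : IntegrableOn (fun x : ℝ => (1 - x) ^ (-1/p)) (Icc (0:ℝ) 1) volume := by
    rw [integrableOn_Icc_iff_integrableOn_Ioc]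
    have := intervalIntegrable_iff.1 hg1
    rwa [Set.uIoc_of_le (by norm_num : (0:ℝ) ≤ 1)] at this
  refine Integrable.mono hg2 ((pf_measurable p).aestronglyMeasurable.restrict) ?_
  refine (ae_restrict_iff' measurableSet_Icc).2 (ae_of_all _ fun s hs => ?_)
  have habs : |s| = s := abs_of_nonneg hs.1
  rcases eq_or_lt_of_le hs.2 with h1 | h1
  · subst h1
    rw [pf_one_eq hp]
    simp
  · have hsp : s ^ p ≤ s := by
      rcases eq_or_lt_of_le hs.1 with h0 | h0
      · rw [← h0, Real.zero_rpow (by positivity)]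
      · calc s ^ p ≤ s ^ (1:ℝ) := Real.rpow_le_rpow_of_exponent_ge h0 h1.le (by linarith)
          _ = s := Real.rpow_one s
    have hb1 : 0 < 1 - s := by linarith
    have hb2 : 1 - s ≤ 1 - |s| ^ p := by rw [habs]; linarith
    have key : pf p s ≤ (1 - s) ^ (-1/p) := by
      have := rpow_neg_exp_anti hp0 hb1 hb2
      simpa [pf] using this
    have h1n : 0 ≤ pf p s := by
      have : (0:ℝ) ≤ 1 - |s| ^ p := by linarith
      exact Real.rpow_nonneg this _
    have h2n : (0:ℝ) ≤ (1 - s) ^ (-1/p) := Real.rpow_nonneg hb1.le _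
    rw [Real.norm_eq_abs, Real.norm_eq_abs, abs_of_nonneg h1n, abs_of_nonneg h2n]
    exact key

lemma pf_neg (p : ℝ) (s : ℝ) : pf p (-s) = pf p s := by simp [pf]

lemma pf_int_Icc_neg10 {p : ℝ} (hp : 1 < p) : IntegrableOn (pf p) (Icc (-1:ℝ) 0) volume := by
  have h1 : IntervalIntegrable (pf p) volume 0 1 := by
    rw [intervalIntegrable_iff, Set.uIoc_of_le (by norm_num : (0:ℝ) ≤ 1)]
    exact (pf_int_Icc01 hp).mono_set Ioc_subset_Icc_self
  have h2 : IntervalIntegrable (fun x => pf p (-x)) volume (-0 : ℝ) (-1 : ℝ) :=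
    (IntervalIntegrable.iff_comp_neg (f := pf p) (a := 0) (b := 1)).1 h1
  have h3 : IntervalIntegrable (pf p) volume (-0:ℝ) (-1:ℝ) := by
    simpa [pf_neg] using h2
  rw [integrableOn_Icc_iff_integrableOn_Ioc]
  have := intervalIntegrable_iff.1 h3.symm
  rwa [show Set.uIoc (-1:ℝ) (-0:ℝ) = Ioc (-1:ℝ) 0 by rw [Set.uIoc_of_le (by norm_num : (-1:ℝ) ≤ -0)]; norm_num] at this

lemma pf_int_Icc1R {p : ℝ} (hp : 1 < p) (R : ℝ) (hR : 1 ≤ R) :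
    IntegrableOn (pf p) (Icc (1:ℝ) R) volume := by
  have hp0 : (0:ℝ) < p := by linarith
  have hr : (-1:ℝ) < -1/p := by
    rw [neg_div, neg_lt_neg_iff, div_lt_one hp0]; linarith
  have hg0 : IntervalIntegrable (fun x : ℝ => x ^ (-1/p)) volume 0 (R - 1) :=
    intervalIntegral.intervalIntegrable_rpow' hr
  have hg1 : IntervalIntegrable (fun x : ℝ => (x - 1) ^ (-1/p)) volume 1 R := by
    have := hg0.comp_sub_right 1
    simpa using this
  have hg2 : IntegrableOn (fun x : ℝ => (x - 1) ^ (-1/p)) (Icc (1:ℝ) R) volume := by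
    rw [integrableOn_Icc_iff_integrableOn_Ioc]
    have := intervalIntegrable_iff.1 hg1
    rwa [Set.uIoc_of_le hR] at this
  refine Integrable.mono hg2 ((pf_measurable p).aestronglyMeasurable.restrict) ?_
  refine (ae_restrict_iff' measurableSet_Icc).2 (ae_of_all _ fun s hs => ?_)
  have habs : |s| = s := abs_of_nonneg (by linarith [hs.1])
  rcases eq_or_lt_of_le hs.1 with h1 | h1
  · rw [← h1, pf_one_eq hp]
    simp
  · have hsp : s ≤ s ^ p := by
      calc s = s ^ (1:ℝ) := (Real.rpow_one s).symm
        _ ≤ s ^ p := Real.rpow_le_rpow_of_exponent_le h1.le hp.le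
    have hb1 : 0 < s - 1 := by linarith
    have hb2 : s - 1 ≤ s ^ p - 1 := by linarith
    have key : |pf p s| ≤ (s - 1) ^ (-1/p) := by
      have e1 : |pf p s| ≤ |1 - |s| ^ p| ^ (-1/p) := Real.abs_rpow_le_abs_rpow _ _
      have e2 : |1 - |s| ^ p| = s ^ p - 1 := by
        rw [habs, abs_of_nonpos (by linarith : 1 - s ^ p ≤ 0)]; ring
      rw [e2] at e1
      exact e1.trans (rpow_neg_exp_anti hp0 hb1 hb2)
    have h2n : (0:ℝ) ≤ (s - 1) ^ (-1/p) := Real.rpow_nonneg hb1.le _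
    rw [Real.norm_eq_abs, Real.norm_eq_abs, abs_of_nonneg h2n]
    exact key

lemma pf_int_Icc_negR {p : ℝ} (hp : 1 < p) (R : ℝ) (hR : 1 ≤ R) :
    IntegrableOn (pf p) (Icc (-R) (-1:ℝ)) volume := by
  have h1 : IntervalIntegrable (pf p) volume 1 R := by
    rw [intervalIntegrable_iff, Set.uIoc_of_le hR]
    exact (pf_int_Icc1R hp R hR).mono_set Ioc_subset_Icc_self
  have h2 : IntervalIntegrable (fun x => pf p (-x)) volume (-1:ℝ) (-R) :=
    (IntervalIntegrable.iff_comp_neg (f := pf p) (a := 1) (b := R)).1 h1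
  have h3 : IntervalIntegrable (pf p) volume (-1:ℝ) (-R) := by
    simpa [pf_neg] using h2
  rw [integrableOn_Icc_iff_integrableOn_Ioc]
  have := intervalIntegrable_iff.1 h3.symm
  rwa [Set.uIoc_of_le (by linarith : (-R:ℝ) ≤ -1)] at this

lemma pf_intervalIntegrable {p : ℝ} (hp : 1 < p) (a b : ℝ) :
    IntervalIntegrable (pf p) volume a b := by
  set R := max (max |a| |b|) 1 with hRdef
  have hR1 : (1:ℝ) ≤ R := le_max_right _ _
  have hRa : |a| ≤ R := le_trans (le_max_left _ _) (le_max_left _ _)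
  have hRb : |b| ≤ R := le_trans (le_max_right _ _) (le_max_left _ _)
  have H : IntegrableOn (pf p) (Icc (-R) R) volume := by
    have hsub : Icc (-R) R ⊆ Icc (-R) (-1) ∪ (Icc (-1) 0 ∪ (Icc 0 1 ∪ Icc 1 R)) := by
      intro x hx
      rcases le_total x (-1) with h | h
      · exact Or.inl ⟨hx.1, h⟩
      rcases le_total x 0 with h' | h'
      · exact Or.inr (Or.inl ⟨h, h'⟩)
      rcases le_total x 1 with h'' | h''
      · exact Or.inr (Or.inr (Or.inl ⟨h', h''⟩))
      · exact Or.inr (Or.inr (Or.inr ⟨h'', hx.2⟩))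
    exact ((pf_int_Icc_negR hp R hR1).union ((pf_int_Icc_neg10 hp).union
      ((pf_int_Icc01 hp).union (pf_int_Icc1R hp R hR1)))).mono_set hsub
  rw [intervalIntegrable_iff]
  refine H.mono_set ?_
  refine subset_trans Set.uIoc_subset_uIcc ?_
  rw [Set.uIcc]
  refine Icc_subset_Icc ?_ ?_
  · simp only [le_inf_iff]
    constructor <;> [skip; skip] <;>
      [exact neg_le_of_abs_le (by simpa using (abs_neg a ▸ hRa)) ; skip]
    exact neg_le_of_abs_le hRb
  · simp only [sup_le_iff]
    exact ⟨le_of_abs_le hRa, le_of_abs_le hRb⟩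

noncomputable def Sp (p : ℝ) : ℝ → ℝ := fun x => ∫ s in (0:ℝ)..x, pf p s

lemma pf_pos {p : ℝ} (hp : 1 < p) {s : ℝ} (hs : s ∈ Ioo (-1:ℝ) 1) : 0 < pf p s := by
  have hp0 : (0:ℝ) < p := by linarith
  have habs : |s| < 1 := abs_lt.2 ⟨hs.1, hs.2⟩
  have h1 : |s| ^ p < 1 := by
    rcases eq_or_lt_of_le (abs_nonneg s) with h0 | h0
    · rw [← h0, Real.zero_rpow hp0.ne']; norm_num
    · calc |s| ^ p < 1 ^ p := Real.rpow_lt_rpow (abs_nonneg s) habs hp0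
        _ = 1 := Real.one_rpow p
  exact Real.rpow_pos_of_pos (by linarith) _

lemma pf_contAt {p : ℝ} (hp : 1 < p) {x : ℝ} (hx : |x| ≠ 1) : ContinuousAt (pf p) x := by
  have hp0 : (0:ℝ) < p := by linarith
  have hbase : Continuous fun s : ℝ => 1 - |s| ^ p :=
    continuous_const.sub (continuous_abs.rpow_const (fun s => Or.inr hp0.le))
  have hne : 1 - |x| ^ p ≠ 0 := by
    rcases lt_or_gt_of_ne hx with h | h
    · have : |x| ^ p < 1 := by
        rcases eq_or_lt_of_le (abs_nonneg x) with h0 | h0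
        · rw [← h0, Real.zero_rpow hp0.ne']; norm_num
        · calc |x| ^ p < 1 ^ p := Real.rpow_lt_rpow (abs_nonneg x) h hp0
            _ = 1 := Real.one_rpow p
      linarith
    · have : 1 < |x| ^ p := by
        rw [Real.one_lt_rpow_iff_of_pos (by linarith : (0:ℝ) < |x|)]
        exact Or.inl ⟨h, hp0⟩
      linarith
  have : ContinuousAt (fun y : ℝ => y ^ (-1/p)) (1 - |x| ^ p) :=
    Real.continuousAt_rpow_const _ _ (Or.inl hne)
  exact ContinuousAt.comp (g := fun y : ℝ => y ^ (-1/p)) (f := fun s : ℝ => 1 - |s| ^ p) this hbase.continuousAt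

lemma Sp_hasDerivAt {p : ℝ} (hp : 1 < p) {x : ℝ} (hx : |x| ≠ 1) :
    HasDerivAt (Sp p) (pf p x) x :=
  intervalIntegral.integral_hasDerivAt_right (pf_intervalIntegrable hp 0 x)
    ((pf_measurable p).stronglyMeasurable.stronglyMeasurableAtFilter)
    (pf_contAt hp hx)

lemma Sp_continuous {p : ℝ} (hp : 1 < p) : Continuous (Sp p) :=
  intervalIntegral.continuous_primitive (fun a b => pf_intervalIntegrable hp a b) 0

lemma Sp_strictMonoOn {p : ℝ} (hp : 1 < p) : StrictMonoOn (Sp p) (Icc (-1:ℝ) 1) := by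
  intro x hx y hy hxy
  have h1 : Sp p y - Sp p x = ∫ s in x..y, pf p s :=
    intervalIntegral.integral_interval_sub_left (pf_intervalIntegrable hp 0 y)
      (pf_intervalIntegrable hp 0 x)
  have h2 : 0 < ∫ s in x..y, pf p s := by
    refine intervalIntegral.intervalIntegral_pos_of_pos_on (pf_intervalIntegrable hp x y)
      (fun s hs => pf_pos hp ⟨lt_of_le_of_lt hx.1 hs.1, lt_of_lt_of_le hs.2 hy.2⟩) hxy
  linarith

lemma Sp_one {p : ℝ} (hp : 1 < p) : Sp p 1 = pip p / 2 := by
  have hsplit : (∫ s in (-1:ℝ)..0, pf p s) + (∫ s in (0:ℝ)..1, pf p s) = ∫ s in (-1:ℝ)..1, pf p s :=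
    intervalIntegral.integral_add_adjacent_intervals (pf_intervalIntegrable hp _ _)
      (pf_intervalIntegrable hp _ _)
  have hsym : (∫ s in (-1:ℝ)..0, pf p s) = ∫ s in (0:ℝ)..1, pf p s := by
    have := intervalIntegral.integral_comp_neg (a := (0:ℝ)) (b := 1) (pf p)
    simp only [pf_neg, neg_zero] at this
    rw [← this]
  have : pip p = ∫ s in (-1:ℝ)..1, pf p s := rfl
  rw [this, ← hsplit, hsym, Sp]
  ring

lemma Sp_negone {p : ℝ} (hp : 1 < p) : Sp p (-1) = -(pip p) / 2 := by
  have hsym : (∫ s in (-1:ℝ)..0, pf p s) = ∫ s in (0:ℝ)..1, pf p s := by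
    have := intervalIntegral.integral_comp_neg (a := (0:ℝ)) (b := 1) (pf p)
    simp only [pf_neg, neg_zero] at this
    rw [← this]
  have h1 : Sp p (-1) = -∫ s in (-1:ℝ)..0, pf p s := intervalIntegral.integral_symm _ _
  rw [h1, hsym]
  have := Sp_one hp
  rw [Sp] at this
  rw [this]
  ring

lemma Sp_zero (p : ℝ) : Sp p 0 = 0 := intervalIntegral.integral_same

section PTrig

variable {p : ℝ} {sinp cosp : ℝ → ℝ}

lemma refl_deriv (htrig : IsPTrig p sinp cosp) (t : ℝ) :
    HasDerivAt (fun u => sinp (pip p - u)) (-(cosp (pip p - t))) t := by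
  have h1 : HasDerivAt (fun u : ℝ => pip p - u) (-1) t := (hasDerivAt_id t).const_sub (pip p)
  have := (htrig.2.2.2 (pip p - t)).comp t h1
  simpa [mul_comm, Function.comp_def] using this

lemma cosp_pi2 (htrig : IsPTrig p sinp cosp) (hP : 0 < pip p) : cosp (pip p / 2) = 0 := by
  set P := pip p with hPdef
  have hmem : P/2 ∈ Icc (P/2) (3*P/2) := ⟨le_refl _, by linarith⟩
  have hU : UniqueDiffWithinAt ℝ (Icc (P/2) (3*P/2)) (P/2) :=
    (uniqueDiffOn_Icc (by linarith)) _ hmem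
  have d1 : HasDerivWithinAt sinp (cosp (P/2)) (Icc (P/2) (3*P/2)) (P/2) :=
    (htrig.2.2.2 _).hasDerivWithinAt
  have d2 : HasDerivWithinAt sinp (-(cosp (P - P/2))) (Icc (P/2) (3*P/2)) (P/2) := by
    refine ((refl_deriv htrig (P/2)).hasDerivWithinAt).congr ?_ ?_
    · exact fun y hy => htrig.2.1 y hy
    · exact htrig.2.1 _ hmem
  have heq : cosp (P/2) = -(cosp (P - P/2)) := by
    rw [← d1.derivWithin hU, ← d2.derivWithin hU]
  have harg : P - P/2 = P/2 := by ring
  rw [harg] at heq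
  linarith

lemma cosp_periodic (htrig : IsPTrig p sinp cosp) (t : ℝ) :
    cosp (t + 2 * pip p) = cosp t := by
  have h1 : HasDerivAt (fun u => sinp (u + 2 * pip p)) (cosp (t + 2 * pip p)) t := by
    have := (htrig.2.2.2 (t + 2 * pip p)).comp t ((hasDerivAt_id t).add_const (2 * pip p))
    simpa [Function.comp_def] using this
  have h2 : (fun u => sinp (u + 2 * pip p)) = sinp := funext htrig.2.2.1
  rw [h2] at h1
  exact h1.unique (htrig.2.2.2 t)

lemma cosp_neg_pi2 (htrig : IsPTrig p sinp cosp) (hP : 0 < pip p) :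
    cosp (-(pip p)/2) = 0 := by
  set P := pip p with hPdef
  have hmem : 3*P/2 ∈ Icc (P/2) (3*P/2) := ⟨by linarith, le_refl _⟩
  have hU : UniqueDiffWithinAt ℝ (Icc (P/2) (3*P/2)) (3*P/2) :=
    (uniqueDiffOn_Icc (by linarith)) _ hmem
  have d1 : HasDerivWithinAt sinp (cosp (3*P/2)) (Icc (P/2) (3*P/2)) (3*P/2) :=
    (htrig.2.2.2 _).hasDerivWithinAt
  have d2 : HasDerivWithinAt sinp (-(cosp (P - 3*P/2))) (Icc (P/2) (3*P/2)) (3*P/2) := by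
    refine ((refl_deriv htrig (3*P/2)).hasDerivWithinAt).congr ?_ ?_
    · exact fun y hy => htrig.2.1 y hy
    · exact htrig.2.1 _ hmem
  have heq : cosp (3*P/2) = -(cosp (P - 3*P/2)) := by
    rw [← d1.derivWithin hU, ← d2.derivWithin hU]
  have harg : P - 3*P/2 = -P/2 := by ring
  rw [harg] at heq
  have hper : cosp (-P/2 + 2 * P) = cosp (-P/2) := cosp_periodic htrig _
  have harg2 : -P/2 + 2*P = 3*P/2 := by ring
  rw [harg2] at hper
  linarith

lemma sinp_identity (htrig : IsPTrig p sinp cosp) {t : ℝ}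
    (ht : t ∈ Icc (-(pip p)/2) (pip p/2)) : Sp p (sinp t) = t :=
  (htrig.1 t ht).symm

lemma key_prod (hp : 1 < p) (htrig : IsPTrig p sinp cosp) (hP : 0 < pip p) {t : ℝ}
    (ht : t ∈ Icc (-(pip p)/2) (pip p/2)) (hs : |sinp t| ≠ 1) :
    pf p (sinp t) * cosp t = 1 := by
  have hd : HasDerivAt (fun u => Sp p (sinp u)) (pf p (sinp t) * cosp t) t :=
    (Sp_hasDerivAt hp hs).comp t (htrig.2.2.2 t)
  have hU : UniqueDiffWithinAt ℝ (Icc (-(pip p)/2) (pip p/2)) t :=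
    (uniqueDiffOn_Icc (by linarith : -(pip p)/2 < pip p/2)) _ ht
  have d1 : HasDerivWithinAt id (pf p (sinp t) * cosp t) (Icc (-(pip p)/2) (pip p/2)) t := by
    refine (hd.hasDerivWithinAt).congr ?_ ?_
    · exact fun y hy => (sinp_identity htrig hy).symm
    · exact (sinp_identity htrig ht).symm
  have d2 : HasDerivWithinAt id 1 (Icc (-(pip p)/2) (pip p/2)) t :=
    (hasDerivAt_id t).hasDerivWithinAt
  rw [← d1.derivWithin hU, ← d2.derivWithin hU]

lemma sinp_neg_pi2 (hp : 1 < p) (htrig : IsPTrig p sinp cosp) (hP : 0 < pip p) :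
    sinp (-(pip p)/2) = -1 := by
  have ht : -(pip p)/2 ∈ Icc (-(pip p)/2) (pip p/2) := ⟨le_refl _, by linarith⟩
  by_contra h
  have habs : |sinp (-(pip p)/2)| = 1 := by
    by_contra habs
    have := key_prod hp htrig hP ht habs
    rw [cosp_neg_pi2 htrig hP] at this
    simp at this
  have h1 : sinp (-(pip p)/2) = 1 := by
    rcases abs_eq (by norm_num : (0:ℝ) ≤ 1) |>.1 habs with h' | h'
    · exact h'
    · exact absurd h' h
  have := sinp_identity htrig ht
  rw [h1, Sp_one hp] at this
  linarith

lemma sinp_pi2 (hp : 1 < p) (htrig : IsPTrig p sinp cosp) (hP : 0 < pip p) :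
    sinp (pip p/2) = 1 := by
  have ht : pip p/2 ∈ Icc (-(pip p)/2) (pip p/2) := ⟨by linarith, le_refl _⟩
  by_contra h
  have habs : |sinp (pip p/2)| = 1 := by
    by_contra habs
    have := key_prod hp htrig hP ht habs
    rw [cosp_pi2 htrig hP] at this
    simp at this
  have h1 : sinp (pip p/2) = -1 := by
    rcases abs_eq (by norm_num : (0:ℝ) ≤ 1) |>.1 habs with h' | h'
    · exact absurd h' h
    · exact h'
  have := sinp_identity htrig ht
  rw [h1, Sp_negone hp] at this
  linarith

lemma sinp_continuous (htrig : IsPTrig p sinp cosp) : Continuous sinp :=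
  continuous_iff_continuousAt.2 fun t => (htrig.2.2.2 t).continuousAt

end PTrig

section PTrig2

variable {p : ℝ} {sinp cosp : ℝ → ℝ}

lemma sinp_mem_Icc (hp : 1 < p) (htrig : IsPTrig p sinp cosp) (hP : 0 < pip p) {t : ℝ}
    (ht : t ∈ Icc (-(pip p)/2) (pip p/2)) : sinp t ∈ Icc (-1:ℝ) 1 := by
  by_contra h
  have h' : sinp t < -1 ∨ 1 < sinp t := by
    rcases lt_trichotomy (sinp t) (-1) with h1 | h1 | h1
    · exact Or.inl h1
    · exact absurd ⟨h1.ge, by linarith⟩ h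
    · rcases lt_trichotomy (sinp t) 1 with h2 | h2 | h2
      · exact absurd ⟨h1.le, h2.le⟩ h
      · exact absurd ⟨h1.le, h2.le⟩ h
      · exact Or.inr h2
  rcases h' with h' | h'
  · -- sinp t < -1 : find crossing of -1 on [t, pip/2]
    have hne : t ≠ pip p/2 := by
      intro he; rw [he, sinp_pi2 hp htrig hP] at h'; linarith
    have hIVT : (-1:ℝ) ∈ Icc (sinp t) (sinp (pip p/2)) := by
      rw [sinp_pi2 hp htrig hP]; exact ⟨h'.le, by norm_num⟩
    obtain ⟨t', ht', hval⟩ := intermediate_value_Icc (lt_of_le_of_ne ht.2 hne).le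
      ((sinp_continuous htrig).continuousOn) hIVT
    have hmem : t' ∈ Icc (-(pip p)/2) (pip p/2) := ⟨le_trans ht.1 ht'.1, ht'.2⟩
    have := sinp_identity htrig hmem
    rw [hval, Sp_negone hp] at this
    have htt' : t = t' := le_antisymm ht'.1 (by linarith [ht.1])
    rw [htt', hval] at h'
    linarith
  · have hne : t ≠ -(pip p)/2 := by
      intro he; rw [he, sinp_neg_pi2 hp htrig hP] at h'; linarith
    have hIVT : (1:ℝ) ∈ Icc (sinp (-(pip p)/2)) (sinp t) := by
      rw [sinp_neg_pi2 hp htrig hP]; exact ⟨by norm_num, h'.le⟩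
    obtain ⟨t', ht', hval⟩ := intermediate_value_Icc (lt_of_le_of_ne' ht.1 hne).le
      ((sinp_continuous htrig).continuousOn) hIVT
    have hmem : t' ∈ Icc (-(pip p)/2) (pip p/2) := ⟨ht'.1, le_trans ht'.2 ht.2⟩
    have := sinp_identity htrig hmem
    rw [hval, Sp_one hp] at this
    have htt' : t = t' := le_antisymm (by linarith [ht.2]) ht'.2
    rw [htt', hval] at h'
    linarith


lemma sinp_strictMonoOn (hp : 1 < p) (htrig : IsPTrig p sinp cosp) (hP : 0 < pip p) :
    StrictMonoOn sinp (Icc (-(pip p)/2) (pip p/2)) := by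
  intro x hx y hy hxy
  by_contra h
  push_neg at h
  have h1 : Sp p (sinp y) ≤ Sp p (sinp x) :=
    (Sp_strictMonoOn hp).monotoneOn (sinp_mem_Icc hp htrig hP hy)
      (sinp_mem_Icc hp htrig hP hx) h
  rw [sinp_identity htrig hx, sinp_identity htrig hy] at h1
  linarith

lemma sinp_zero (hp : 1 < p) (htrig : IsPTrig p sinp cosp) (hP : 0 < pip p) :
    sinp 0 = 0 := by
  have h0 : (0:ℝ) ∈ Icc (-(pip p)/2) (pip p/2) := ⟨by linarith, by linarith⟩
  have h1 : Sp p (sinp 0) = 0 := sinp_identity htrig h0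
  have h2 : Sp p 0 = 0 := Sp_zero p
  exact (Sp_strictMonoOn hp).injOn (sinp_mem_Icc hp htrig hP h0)
    (⟨by norm_num, by norm_num⟩ : (0:ℝ) ∈ Icc (-1:ℝ) 1) (by rw [h1, h2])

lemma sinp_mem_Ioo (hp : 1 < p) (htrig : IsPTrig p sinp cosp) (hP : 0 < pip p) {t : ℝ}
    (ht : t ∈ Ioo (-(pip p)/2) (pip p/2)) : sinp t ∈ Ioo (-1:ℝ) 1 := by
  have hIcc := sinp_mem_Icc hp htrig hP (Ioo_subset_Icc_self ht)
  rcases eq_or_lt_of_le hIcc.1 with h1 | h1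
  · exfalso
    have := sinp_identity htrig (Ioo_subset_Icc_self ht)
    rw [← h1, Sp_negone hp] at this
    exact absurd this.symm (ne_of_gt ht.1)
  rcases eq_or_lt_of_le hIcc.2 with h2 | h2
  · exfalso
    have := sinp_identity htrig (Ioo_subset_Icc_self ht)
    rw [h2, Sp_one hp] at this
    exact (ne_of_lt ht.2) this.symm
  exact ⟨h1, h2⟩

lemma cosp_eq (hp : 1 < p) (htrig : IsPTrig p sinp cosp) (hP : 0 < pip p) {t : ℝ}
    (ht : t ∈ Ioo (-(pip p)/2) (pip p/2)) :
    cosp t = (1 - |sinp t| ^ p) ^ (1/p) := by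
  have hs := sinp_mem_Ioo hp htrig hP ht
  have habs : |sinp t| < 1 := abs_lt.2 ⟨hs.1, hs.2⟩
  have hane : |sinp t| ≠ 1 := ne_of_lt habs
  have hkey := key_prod hp htrig hP (Ioo_subset_Icc_self ht) hane
  have hp0 : (0:ℝ) < p := by linarith
  have hbase : 0 < 1 - |sinp t| ^ p := by
    rcases eq_or_lt_of_le (abs_nonneg (sinp t)) with h0 | h0
    · rw [← h0, Real.zero_rpow hp0.ne']; norm_num
    · have : |sinp t| ^ p < 1 := by
        calc |sinp t| ^ p < 1 ^ p := Real.rpow_lt_rpow (abs_nonneg _) habs hp0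
          _ = 1 := Real.one_rpow p
      linarith
  have hpf : pf p (sinp t) = ((1 - |sinp t| ^ p) ^ (1/p))⁻¹ := by
    rw [pf]
    rw [neg_div, Real.rpow_neg hbase.le]
  rw [hpf] at hkey
  have hpos : 0 < (1 - |sinp t| ^ p) ^ (1/p) := Real.rpow_pos_of_pos hbase _
  field_simp at hkey
  linarith

lemma cosp_pos (hp : 1 < p) (htrig : IsPTrig p sinp cosp) (hP : 0 < pip p) {t : ℝ}
    (ht : t ∈ Ioo (-(pip p)/2) (pip p/2)) : 0 < cosp t := by
  rw [cosp_eq hp htrig hP ht]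
  have hs := sinp_mem_Ioo hp htrig hP ht
  have habs : |sinp t| < 1 := abs_lt.2 ⟨hs.1, hs.2⟩
  have hp0 : (0:ℝ) < p := by linarith
  have hbase : 0 < 1 - |sinp t| ^ p := by
    rcases eq_or_lt_of_le (abs_nonneg (sinp t)) with h0 | h0
    · rw [← h0, Real.zero_rpow hp0.ne']; norm_num
    · have : |sinp t| ^ p < 1 := by
        calc |sinp t| ^ p < 1 ^ p := Real.rpow_lt_rpow (abs_nonneg _) habs hp0
          _ = 1 := Real.one_rpow p
      linarith
  exact Real.rpow_pos_of_pos hbase _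

end PTrig2

noncomputable def mfun (p : ℝ) : ℝ → ℝ := fun v => v * (1 - |v| ^ p) ^ ((p-1)/p)

lemma mfun_continuous {p : ℝ} (hp : 1 < p) : Continuous (mfun p) := by
  have hq : (0:ℝ) ≤ (p-1)/p := div_nonneg (by linarith) (by linarith)
  exact continuous_id.mul ((continuous_const.sub
    (continuous_abs.rpow_const (fun s => Or.inr (by linarith)))).rpow_const
    (fun s => Or.inr hq))

lemma mfun_one {p : ℝ} (hp : 1 < p) : mfun p 1 = 0 := by
  have hq : ((p-1)/p) ≠ 0 := ne_of_gt (div_pos (by linarith) (by linarith))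
  simp [mfun, Real.one_rpow, Real.zero_rpow hq]

lemma mfun_hasDerivAt {p : ℝ} (hp : 1 < p) {v : ℝ} (hv : v ∈ Ioo (0:ℝ) 1) :
    HasDerivAt (mfun p) ((1 - v ^ p) ^ ((p-1)/p - 1) * (1 - p * v ^ p)) v := by
  have hp0 : (0:ℝ) < p := by linarith
  set q : ℝ := (p-1)/p with hq
  have hv0 : 0 < v := hv.1
  have hv1 : v < 1 := hv.2
  have hvp : v ^ p < 1 := by
    calc v ^ p < 1 ^ p := Real.rpow_lt_rpow hv0.le hv1 hp0
      _ = 1 := Real.one_rpow p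
  have hbase : 0 < 1 - v ^ p := by linarith
  have hinner : HasDerivAt (fun w : ℝ => 1 - w ^ p) (-(p * v ^ (p-1))) v :=
    (Real.hasDerivAt_rpow_const (Or.inl hv0.ne')).const_sub 1
  have houter : HasDerivAt (fun x : ℝ => x ^ q) (q * (1 - v ^ p) ^ (q - 1)) (1 - v ^ p) :=
    Real.hasDerivAt_rpow_const (Or.inl hbase.ne')
  have hcomp : HasDerivAt (fun w : ℝ => (1 - w ^ p) ^ q)
      (q * (1 - v ^ p) ^ (q - 1) * -(p * v ^ (p-1))) v := by have := houter.comp v hinner; exact this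
  have hprod : HasDerivAt (fun w : ℝ => w * (1 - w ^ p) ^ q)
      (1 * (1 - v ^ p) ^ q + v * (q * (1 - v ^ p) ^ (q - 1) * -(p * v ^ (p-1)))) v :=
    (hasDerivAt_id v).mul hcomp
  have heq : (fun w : ℝ => w * (1 - w ^ p) ^ q) =ᶠ[nhds v] mfun p := by
    filter_upwards [Ioi_mem_nhds hv0] with w hw
    rw [mfun, abs_of_pos hw]
  have hfinal := hprod.congr_of_eventuallyEq heq.symm
  refine hfinal.congr_deriv (Eq.symm ?_)
  have e1 : (1 - v ^ p) ^ q = (1 - v ^ p) ^ (q - 1) * (1 - v ^ p) := by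
    rw [← Real.rpow_add_one hbase.ne' (q-1)]
    norm_num
  have e2 : v * v ^ (p - 1) = v ^ p := by
    rw [mul_comm, ← Real.rpow_add_one hv0.ne' (p-1)]
    norm_num
  have e3 : q * p = p - 1 := by
    rw [hq]; field_simp
  calc (1 - v ^ p) ^ (q-1) * (1 - p * v ^ p)
      = (1 - v ^ p) ^ (q-1) * (1 - v ^ p) - (q * p) * ((1 - v ^ p) ^ (q-1) * (v * v ^ (p-1))) := by
        rw [e2, e3]; ring
    _ = 1 * (1 - v ^ p) ^ q + v * (q * (1 - v ^ p) ^ (q - 1) * -(p * v ^ (p-1))) := by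
        rw [e1]; ring

noncomputable def vstar (p : ℝ) : ℝ := (1/p) ^ (1/p)

lemma vstar_mem {p : ℝ} (hp : 1 < p) : vstar p ∈ Ioo (0:ℝ) 1 := by
  have hp0 : (0:ℝ) < p := by linarith
  constructor
  · exact Real.rpow_pos_of_pos (by positivity) _
  · exact Real.rpow_lt_one (by positivity) (by rw [div_lt_one hp0]; linarith) (by positivity)

lemma vstar_rpow {p : ℝ} (hp : 1 < p) : (vstar p) ^ p = 1/p := by
  have hp0 : (0:ℝ) < p := by linarith
  rw [vstar, ← Real.rpow_mul (by positivity), one_div_mul_cancel hp0.ne', Real.rpow_one]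

lemma mfun_deriv_eq {p : ℝ} (hp : 1 < p) {v : ℝ} (hv : v ∈ Ioo (0:ℝ) 1) :
    deriv (mfun p) v = (1 - v ^ p) ^ ((p-1)/p - 1) * (1 - p * v ^ p) :=
  (mfun_hasDerivAt hp hv).deriv

lemma mfun_strictMonoOn {p : ℝ} (hp : 1 < p) : StrictMonoOn (mfun p) (Icc 0 (vstar p)) := by
  have hp0 : (0:ℝ) < p := by linarith
  refine strictMonoOn_of_deriv_pos (convex_Icc _ _) ((mfun_continuous hp).continuousOn) ?_
  intro x hx
  rw [interior_Icc] at hx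
  have hx1 : x < 1 := lt_trans hx.2 (vstar_mem hp).2
  have hmem : x ∈ Ioo (0:ℝ) 1 := ⟨hx.1, hx1⟩
  rw [mfun_deriv_eq hp hmem]
  have hxp : x ^ p < (vstar p) ^ p := Real.rpow_lt_rpow (le_of_lt hx.1) hx.2 hp0
  rw [vstar_rpow hp] at hxp
  have h2 : 0 < 1 - p * x ^ p := by
    have : p * x ^ p < p * (1/p) := by
      exact mul_lt_mul_of_pos_left hxp hp0
    rw [mul_one_div, div_self hp0.ne'] at this
    linarith
  have hxp1 : x ^ p < 1 := by
    calc x ^ p < 1 ^ p := Real.rpow_lt_rpow (le_of_lt hx.1) hx1 hp0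
      _ = 1 := Real.one_rpow p
  exact mul_pos (Real.rpow_pos_of_pos (by linarith) _) h2

lemma mfun_strictAntiOn {p : ℝ} (hp : 1 < p) : StrictAntiOn (mfun p) (Icc (vstar p) 1) := by
  have hp0 : (0:ℝ) < p := by linarith
  refine strictAntiOn_of_deriv_neg (convex_Icc _ _) ((mfun_continuous hp).continuousOn) ?_
  intro x hx
  rw [interior_Icc] at hx
  have hx0 : 0 < x := lt_trans (vstar_mem hp).1 hx.1
  have hmem : x ∈ Ioo (0:ℝ) 1 := ⟨hx0, hx.2⟩
  rw [mfun_deriv_eq hp hmem]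
  have hxp : (vstar p) ^ p < x ^ p := Real.rpow_lt_rpow (le_of_lt (vstar_mem hp).1) hx.1 hp0
  rw [vstar_rpow hp] at hxp
  have h2 : 1 - p * x ^ p < 0 := by
    have : p * (1/p) < p * x ^ p := mul_lt_mul_of_pos_left hxp hp0
    rw [mul_one_div, div_self hp0.ne'] at this
    linarith
  have hxp1 : x ^ p < 1 := by
    calc x ^ p < 1 ^ p := Real.rpow_lt_rpow hx0.le hx.2 hp0
      _ = 1 := Real.one_rpow p
  exact mul_neg_of_pos_of_neg (Real.rpow_pos_of_pos (by linarith) _) h2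

lemma mfun_roots_straddle {p : ℝ} (hp : 1 < p) {v₁ v₂ : ℝ} (hv₁ : v₁ ∈ Ioo (0:ℝ) 1)
    (hv₂ : v₂ ∈ Ioo (0:ℝ) 1) (h12 : v₁ < v₂) (heq : mfun p v₁ = mfun p v₂) :
    v₁ < vstar p ∧ vstar p < v₂ := by
  constructor
  · by_contra h
    push_neg at h
    have := mfun_strictAntiOn hp ⟨h, hv₁.2.le⟩ ⟨le_trans h h12.le, hv₂.2.le⟩ h12
    linarith
  · by_contra h
    push_neg at h
    have := mfun_strictMonoOn hp ⟨hv₁.1.le, le_trans h12.le h⟩ ⟨hv₂.1.le, h⟩ h12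
    linarith

lemma mfun_between {p : ℝ} (hp : 1 < p) {v₁ v₂ : ℝ} (hv₁ : v₁ ∈ Ioo (0:ℝ) 1)
    (hv₂ : v₂ ∈ Ioo (0:ℝ) 1) (h12 : v₁ < v₂) (heq : mfun p v₁ = mfun p v₂)
    {v : ℝ} (hv : v ∈ Ioo v₁ v₂) : mfun p v₂ < mfun p v := by
  obtain ⟨hs1, hs2⟩ := mfun_roots_straddle hp hv₁ hv₂ h12 heq
  rcases le_total v (vstar p) with h | h
  · rw [← heq]
    exact mfun_strictMonoOn hp ⟨hv₁.1.le, hs1.le⟩ ⟨le_trans hv₁.1.le hv.1.le, h⟩ hv.1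
  · exact mfun_strictAntiOn hp ⟨h, le_trans hv.2.le hv₂.2.le⟩ ⟨hs2.le, hv₂.2.le⟩ hv.2

lemma mfun_after {p : ℝ} (hp : 1 < p) {v₁ v₂ : ℝ} (hv₁ : v₁ ∈ Ioo (0:ℝ) 1)
    (hv₂ : v₂ ∈ Ioo (0:ℝ) 1) (h12 : v₁ < v₂) (heq : mfun p v₁ = mfun p v₂)
    {v : ℝ} (hv2 : v₂ < v) (hv1 : v ≤ 1) : mfun p v < mfun p v₂ := by
  obtain ⟨hs1, hs2⟩ := mfun_roots_straddle hp hv₁ hv₂ h12 heq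
  exact mfun_strictAntiOn hp ⟨hs2.le, hv₂.2.le⟩ ⟨le_trans hs2.le hv2.le, hv1⟩ hv2

lemma spow_zero' (q : ℝ) : spow 0 q = 0 := by simp [spow]

lemma hform {p : ℝ} {sinp cosp : ℝ → ℝ} (hp : 1 < p) (htrig : IsPTrig p sinp cosp)
    (hP : 0 < pip p) {ψ : ℝ} (hψ : ψ ∈ Icc (-(pip p)/2) 0) :
    spow (cosp ψ) (p-1) * sinp ψ = -(mfun p (-(sinp ψ))) := by
  have hp0 : (0:ℝ) < p := by linarith
  rcases eq_or_lt_of_le hψ.1 with h0 | h0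
  · -- ψ = -(pip p)/2
    rw [← h0, cosp_neg_pi2 htrig hP, spow_zero', sinp_neg_pi2 hp htrig hP]
    norm_num
    exact mfun_one hp
  · have hmem : ψ ∈ Ioo (-(pip p)/2) (pip p/2) := ⟨h0, by linarith [hψ.2]⟩
    have hcpos := cosp_pos hp htrig hP hmem
    have hceq := cosp_eq hp htrig hP hmem
    set u := sinp ψ with hu
    have hbase : 0 < 1 - |u| ^ p := by
      have hs := sinp_mem_Ioo hp htrig hP hmem
      have habs : |u| < 1 := abs_lt.2 ⟨hs.1, hs.2⟩
      rcases eq_or_lt_of_le (abs_nonneg u) with hz | hz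
      · rw [← hz, Real.zero_rpow hp0.ne']; norm_num
      · have : |u| ^ p < 1 := by
          calc |u| ^ p < 1 ^ p := Real.rpow_lt_rpow (abs_nonneg _) habs hp0
            _ = 1 := Real.one_rpow p
        linarith
    have hspow : spow (cosp ψ) (p-1) = (1 - |u| ^ p) ^ ((p-1)/p) := by
      rw [spow, Real.sign_of_pos hcpos, abs_of_pos hcpos, one_mul, hceq,
        ← Real.rpow_mul hbase.le]
      congr 1
      field_simp
    rw [hspow, mfun, abs_neg]
    ring

lemma ode_no_down {F φ : ℝ → ℝ} (hφ : ∀ t, HasDerivAt φ (F (φ t)) t) {l : ℝ}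
    (hF : 0 < F l) {t₁ t₂ : ℝ} (h12 : t₁ ≤ t₂) (h1 : l ≤ φ t₁) : l ≤ φ t₂ := by
  by_contra hcon
  push_neg at hcon
  have hφc : Continuous φ := continuous_iff_continuousAt.2 fun t => (hφ t).continuousAt
  set K := Icc t₁ t₂ ∩ φ ⁻¹' (Ici l) with hK
  have hKc : IsCompact K := isCompact_Icc.inter_right (isClosed_Ici.preimage hφc)
  have hKne : K.Nonempty := ⟨t₁, ⟨le_refl _, h12⟩, h1⟩
  set s := sSup K with hs_def
  have hsK : s ∈ K := hKc.sSup_mem hKne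
  have hsle : s ≤ t₂ := hsK.1.2
  have hsne : s ≠ t₂ := by
    intro he
    have : l ≤ φ t₂ := he ▸ hsK.2
    linarith
  have hslt : s < t₂ := lt_of_le_of_ne hsle hsne
  have hgt : ∀ t ∈ Ioc s t₂, φ t < l := by
    intro t ht
    by_contra hc
    push_neg at hc
    have htK : t ∈ K := ⟨⟨le_trans hsK.1.1 ht.1.le, ht.2⟩, hc⟩
    exact absurd (le_csSup hKc.bddAbove htK) (not_le.2 ht.1)
  have hφs : φ s = l := by
    refine le_antisymm ?_ hsK.2
    have htend : Tendsto φ (nhdsWithin s (Ioi s)) (nhds (φ s)) :=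
      (hφc.tendsto s).mono_left nhdsWithin_le_nhds
    have hev : ∀ᶠ t in nhdsWithin s (Ioi s), φ t ≤ l := by
      filter_upwards [Ioc_mem_nhdsGT_of_mem ⟨le_refl s, hslt⟩] with t ht
      exact (hgt t ht).le
    exact le_of_tendsto htend hev
  have hd : HasDerivAt φ (F l) s := by
    have := hφ s
    rwa [hφs] at this
  have hslope := hasDerivAt_iff_tendsto_slope.1 hd
  have hsub : Ioi s ⊆ {s}ᶜ := fun x hx => ne_of_gt hx
  have hev2 : ∀ᶠ t in nhdsWithin s (Ioi s), slope φ s t ∈ Ioi (0:ℝ) :=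
    (hslope.mono_left (nhdsWithin_mono s hsub)).eventually_mem (Ioi_mem_nhds hF)
  have hev3 : ∀ᶠ t in nhdsWithin s (Ioi s), t ∈ Ioc s t₂ :=
    Ioc_mem_nhdsGT_of_mem ⟨le_refl s, hslt⟩
  obtain ⟨t, hts, htmem⟩ := (hev2.and hev3).exists
  have htgt : s < t := htmem.1
  have : 0 < φ t - φ s := by
    have hslope_eq : slope φ s t = (φ t - φ s) / (t - s) := slope_def_field φ s t
    rw [hslope_eq] at hts
    have := mul_pos (Set.mem_Ioi.1 hts) (sub_pos.2 htgt)
    rwa [div_mul_cancel₀ _ (ne_of_gt (sub_pos.2 htgt))] at this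
  rw [hφs] at this
  exact absurd (hgt t htmem) (not_lt.2 (by linarith))

lemma ode_no_up {F φ : ℝ → ℝ} (hφ : ∀ t, HasDerivAt φ (F (φ t)) t) {l : ℝ}
    (hF : F l < 0) {t₁ t₂ : ℝ} (h12 : t₁ ≤ t₂) (h1 : φ t₁ ≤ l) : φ t₂ ≤ l := by
  have hψ : ∀ t, HasDerivAt (fun u => -(φ u)) ((fun x => -(F (-x))) (-(φ t))) t := by
    intro t
    have := (hφ t).neg
    simp only [neg_neg]; exact this
  have := ode_no_down (F := fun x => -(F (-x))) (φ := fun u => -(φ u)) hψ (l := -l)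
    (by simpa using hF) h12 (by simpa using h1)
  simpa using this

/-- if `0 < α < ᾱ` and `ψ₁ < ψ₂` in `(-π_p/2,0)` are the two roots
of `α + ((n-1)√(-k)/(p-1))·cos_p^{(p-1)}(ψ)·sin_p(ψ) = 0`, then the solution of
the corresponding Prüfer IVP with `φ(0) = -π_p/2` stays below `ψ₂ - ε` for some
`ε > 0`, converges to `ψ₁` at infinity, and never reaches `π_p/2`. -/
theorem stmt9 (p n k α : ℝ) (hp : 1 < p) (hn : 2 ≤ n) (hk : k < 0) (hα : 0 < α)
    (sinp cosp : ℝ → ℝ) (htrig : IsPTrig p sinp cosp)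
    (l : ℝ)
    (hl : IsGreatest ((fun ψ => -(spow (cosp ψ) (p-1) * sinp ψ)) ''
            Set.Ioo (-(pip p)/2) 0) l)
    (hαsmall : α < (n-1) * l * Real.sqrt (-k) / (p-1))
    (ψ₁ ψ₂ : ℝ) (h1 : ψ₁ ∈ Set.Ioo (-(pip p)/2) 0) (h2 : ψ₂ ∈ Set.Ioo (-(pip p)/2) 0)
    (h12 : ψ₁ < ψ₂)
    (hr1 : α + (n-1) * Real.sqrt (-k) / (p-1) * spow (cosp ψ₁) (p-1) * sinp ψ₁ = 0)
    (hr2 : α + (n-1) * Real.sqrt (-k) / (p-1) * spow (cosp ψ₂) (p-1) * sinp ψ₂ = 0)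
    (φ : ℝ → ℝ) (hφ0 : φ 0 = -(pip p)/2)
    (hφ : ∀ t, HasDerivAt φ
      (α + (n-1) * Real.sqrt (-k) / (p-1) * spow (cosp (φ t)) (p-1) * sinp (φ t)) t) :
    (∃ ε > 0, ∀ t : ℝ, 0 ≤ t → φ t ≤ ψ₂ - ε) ∧
    Filter.Tendsto φ Filter.atTop (nhds ψ₁) ∧
    (∀ t : ℝ, 0 ≤ t → φ t < pip p / 2) := by
  classical
  have hP : 0 < pip p := by
    have := h1.1
    have := h1.2
    linarith
  have hp0 : (0:ℝ) < p := by linarith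
  set c := (n-1) * Real.sqrt (-k) / (p-1) with hc
  have hcpos : 0 < c :=
    div_pos (mul_pos (by linarith) (Real.sqrt_pos.2 (by linarith))) (by linarith)
  set F : ℝ → ℝ := fun ψ => α + c * spow (cosp ψ) (p-1) * sinp ψ with hFdef
  have hφ' : ∀ t, HasDerivAt φ (F (φ t)) t := fun t => hφ t
  have hψ₁m : ψ₁ ∈ Icc (-(pip p)/2) (pip p/2) := ⟨h1.1.le, by linarith [h1.2]⟩
  have hψ₂m : ψ₂ ∈ Icc (-(pip p)/2) (pip p/2) := ⟨h2.1.le, by linarith [h2.2]⟩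
  have hmono := sinp_strictMonoOn hp htrig hP
  have h0m : (0:ℝ) ∈ Icc (-(pip p)/2) (pip p/2) := ⟨by linarith, by linarith⟩
  have hs0 := sinp_zero hp htrig hP
  have hu1 : sinp ψ₁ ∈ Ioo (-1:ℝ) 0 := by
    have ha := sinp_mem_Ioo hp htrig hP ⟨h1.1, by linarith [h1.2]⟩
    have hb : sinp ψ₁ < sinp 0 := hmono hψ₁m h0m h1.2
    rw [hs0] at hb
    exact ⟨ha.1, hb⟩
  have hu2 : sinp ψ₂ ∈ Ioo (-1:ℝ) 0 := by
    have ha := sinp_mem_Ioo hp htrig hP ⟨h2.1, by linarith [h2.2]⟩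
    have hb : sinp ψ₂ < sinp 0 := hmono hψ₂m h0m h2.2
    rw [hs0] at hb
    exact ⟨ha.1, hb⟩
  set v₁ := -(sinp ψ₂) with hv₁def
  set v₂ := -(sinp ψ₁) with hv₂def
  have hv₁ : v₁ ∈ Ioo (0:ℝ) 1 := ⟨by simp [hv₁def]; linarith [hu2.2], by simp [hv₁def]; linarith [hu2.1]⟩
  have hv₂ : v₂ ∈ Ioo (0:ℝ) 1 := ⟨by simp [hv₂def]; linarith [hu1.2], by simp [hv₂def]; linarith [hu1.1]⟩
  have hv12 : v₁ < v₂ := by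
    have : sinp ψ₁ < sinp ψ₂ := hmono hψ₁m hψ₂m h12
    simp [hv₁def, hv₂def]
    linarith
  have hFeq : ∀ ψ ∈ Icc (-(pip p)/2) 0, F ψ = α - c * mfun p (-(sinp ψ)) := by
    intro ψ hψ
    have := hform hp htrig hP hψ
    rw [hFdef]
    simp only []
    rw [mul_assoc, this]
    ring
  have hroot2 : c * mfun p v₂ = α := by
    have h01 : F ψ₁ = 0 := hr1
    rw [hFeq ψ₁ ⟨h1.1.le, h1.2.le⟩] at h01
    rw [hv₂def]
    linarith
  have hroot1 : c * mfun p v₁ = α := by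
    have h01 : F ψ₂ = 0 := hr2
    rw [hFeq ψ₂ ⟨h2.1.le, h2.2.le⟩] at h01
    rw [hv₁def]
    linarith
  have hmeq : mfun p v₁ = mfun p v₂ := by
    have : c * mfun p v₁ = c * mfun p v₂ := by rw [hroot1, hroot2]
    exact mul_left_cancel₀ hcpos.ne' this
  have hFpos : ∀ ψ, -(pip p)/2 ≤ ψ → ψ < ψ₁ → 0 < F ψ := by
    intro ψ hge hlt
    have hψIcc0 : ψ ∈ Icc (-(pip p)/2) 0 := ⟨hge, by linarith [h1.2]⟩
    rw [hFeq ψ hψIcc0]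
    have hψm : ψ ∈ Icc (-(pip p)/2) (pip p/2) := ⟨hge, by linarith [h1.2]⟩
    have hvgt : v₂ < -(sinp ψ) := by
      have : sinp ψ < sinp ψ₁ := hmono hψm hψ₁m hlt
      rw [hv₂def]; linarith
    have hvle : -(sinp ψ) ≤ 1 := by
      have := (sinp_mem_Icc hp htrig hP hψm).1
      linarith
    have hlt2 : mfun p (-(sinp ψ)) < mfun p v₂ := mfun_after hp hv₁ hv₂ hv12 hmeq hvgt hvle
    have : c * mfun p (-(sinp ψ)) < c * mfun p v₂ := mul_lt_mul_of_pos_left hlt2 hcpos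
    linarith [hroot2]
  have hFneg : ∀ ψ, ψ₁ < ψ → ψ < ψ₂ → F ψ < 0 := by
    intro ψ hgt hlt
    have hψIcc0 : ψ ∈ Icc (-(pip p)/2) 0 := ⟨by linarith [h1.1], by linarith [h2.2]⟩
    rw [hFeq ψ hψIcc0]
    have hψm : ψ ∈ Icc (-(pip p)/2) (pip p/2) := ⟨hψIcc0.1, by linarith [h2.2]⟩
    have hva : v₁ < -(sinp ψ) := by
      have : sinp ψ < sinp ψ₂ := hmono hψm hψ₂m hlt
      rw [hv₁def]; linarith
    have hvb : -(sinp ψ) < v₂ := by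
      have : sinp ψ₁ < sinp ψ := hmono hψ₁m hψm hgt
      rw [hv₂def]; linarith
    have hlt2 : mfun p v₂ < mfun p (-(sinp ψ)) := mfun_between hp hv₁ hv₂ hv12 hmeq ⟨hva, hvb⟩
    have : c * mfun p v₂ < c * mfun p (-(sinp ψ)) := mul_lt_mul_of_pos_left hlt2 hcpos
    linarith [hroot2]
  have hF0 : F (-(pip p)/2) = α := by
    rw [hFeq _ ⟨le_refl _, by linarith⟩, sinp_neg_pi2 hp htrig hP]
    norm_num [mfun_one hp]
  have hlow : ∀ t, 0 ≤ t → -(pip p)/2 ≤ φ t := by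
    intro t ht
    refine ode_no_down hφ' ?_ ht ?_
    · rw [hF0]; exact hα
    · rw [hφ0]
  have hup : ∀ t, 0 ≤ t → φ t ≤ ψ₁ := by
    intro t ht
    by_contra hcon
    push_neg at hcon
    set L := min ((ψ₁ + φ t)/2) ((ψ₁ + ψ₂)/2) with hLdef
    have hL1 : ψ₁ < L := lt_min (by linarith) (by linarith)
    have hL2 : L < ψ₂ := lt_of_le_of_lt (min_le_right _ _) (by linarith)
    have hL3 : L < φ t := lt_of_le_of_lt (min_le_left _ _) (by linarith)
    have := ode_no_up hφ' (hFneg L hL1 hL2) ht (by rw [hφ0]; linarith [h1.1])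
    linarith
  have hφc : Continuous φ := continuous_iff_continuousAt.2 fun t => (hφ' t).continuousAt
  have hFcont : ContinuousOn F (Icc (-(pip p)/2) 0) := by
    have hg : Continuous (fun ψ => α - c * mfun p (-(sinp ψ))) :=
      continuous_const.sub (continuous_const.mul
        ((mfun_continuous hp).comp (sinp_continuous htrig).neg))
    exact hg.continuousOn.congr hFeq
  have hreach : ∀ L, -(pip p)/2 ≤ L → L < ψ₁ → ∃ t₀, 0 ≤ t₀ ∧ L ≤ φ t₀ := by
    intro L hLa hLb
    by_contra hcon
    push_neg at hcon
    have hL0 : L ≤ 0 := by linarith [h1.2]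
    obtain ⟨x₀, hx₀mem, hx₀min'⟩ := isCompact_Icc.exists_isMinOn (nonempty_Icc.2 hLa)
      (hFcont.mono (Icc_subset_Icc le_rfl hL0))
    have hx₀min : ∀ y ∈ Icc (-(pip p)/2) L, F x₀ ≤ F y := fun y hy => hx₀min' hy
    set δ := F x₀ with hδdef
    have hδpos : 0 < δ := hFpos x₀ hx₀mem.1 (lt_of_le_of_lt hx₀mem.2 hLb)
    have hder : ∀ t, 0 ≤ t → δ ≤ F (φ t) := by
      intro t ht
      exact hx₀min (φ t) ⟨hlow t ht, (hcon t ht).le⟩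
    have hmono2 : MonotoneOn (fun t => φ t - δ * t) (Ici (0:ℝ)) := by
      refine monotoneOn_of_deriv_nonneg (convex_Ici 0)
        ((hφc.sub (continuous_const.mul continuous_id)).continuousOn) ?_ ?_
      · intro t ht
        exact ((hφ' t).sub ((hasDerivAt_id t).const_mul δ)).differentiableAt.differentiableWithinAt
      · intro t ht
        rw [interior_Ici] at ht
        have hD : HasDerivAt (fun t => φ t - δ * t) (F (φ t) - δ * 1) t :=
          (hφ' t).sub ((hasDerivAt_id t).const_mul δ)
        rw [hD.deriv]
        have := hder t (le_of_lt ht)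
        linarith
    set T := (L + pip p/2)/δ + 1 with hTdef
    have h1' : 0 ≤ (L + pip p/2)/δ := div_nonneg (by linarith) hδpos.le
    have hT0 : (0:ℝ) ≤ T := by rw [hTdef]; linarith
    have hTm : φ 0 - δ * 0 ≤ φ T - δ * T := hmono2 (self_mem_Ici) (mem_Ici.2 hT0) hT0
    rw [hφ0] at hTm
    have hδT : δ * T = L + pip p/2 + δ := by
      rw [hTdef, mul_add, mul_one, mul_div_cancel₀ _ hδpos.ne']
    clear_value T δ
    have : L < φ T := by nlinarith [hTm, hδT, hδpos]
    exact absurd this (not_lt.2 (hcon T hT0).le)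
  have htend : Tendsto φ atTop (nhds ψ₁) := by
    rw [tendsto_order]
    constructor
    · intro b hb
      set L := max (-(pip p)/2) ((b + ψ₁)/2) with hLdef
      have hLa : -(pip p)/2 ≤ L := le_max_left _ _
      have hLb : L < ψ₁ := max_lt (by linarith [h1.1]) (by linarith)
      have hLgtb : b < L := lt_of_lt_of_le (by linarith) (le_max_right _ _)
      obtain ⟨t₀, ht₀, hreached⟩ := hreach L hLa hLb
      rw [eventually_atTop]
      refine ⟨t₀, fun t ht => ?_⟩
      have := ode_no_down hφ' (hFpos L hLa hLb) ht hreached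
      linarith
    · intro b hb
      rw [eventually_atTop]
      refine ⟨0, fun t ht => ?_⟩
      linarith [hup t ht]
  refine ⟨⟨ψ₂ - ψ₁, by linarith, fun t ht => by linarith [hup t ht]⟩, htend, fun t ht => ?_⟩
  have := hup t ht
  linarith [h1.2, hP]
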